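/- For all a, b, c ∈ 𝕆, the characteristic polynomial of the ℂ-linear endomorphism L_a∘L_b∘R_c + R_c̄∘L_b̄∘L_ā of the 8-dimensional space 𝕆 is divisible by (X − 2·Re(c̄·(b·a)))⁴ in ℂ[X]; that is, 2·Re(c̄·(b·a)) is an eigenvalue of the map x ↦ a·(b·(x·c)) + (b̄·(ā·x))·c̄ of algebraic multiplicity at least 4. -/

import Mathlib

noncomputable section

open scoped Quaternion

/-- The complexified quaternions. -/
abbrev Hq : Type := Quaternion ℂ

theorem q_mul_smul (t : ℂ) (a b : Hq) : a * (t • b) = t • (a * b) := by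
  rw [← Quaternion.coe_mul_eq_smul, ← Quaternion.coe_mul_eq_smul, ← mul_assoc,
    ← Quaternion.coe_commutes, mul_assoc]

theorem q_smul_mul (t : ℂ) (a b : Hq) : (t • a) * b = t • (a * b) := by
  rw [← Quaternion.coe_mul_eq_smul, ← Quaternion.coe_mul_eq_smul, mul_assoc]

/-- The complexified octonions, via the Cayley–Dickson construction. -/
abbrev Oct : Type := Hq × Hq

namespace Oct

/-- Octonion multiplication (Cayley–Dickson construction). -/
def omul (x y : Oct) : Oct := (x.1 * y.1 - star y.2 * x.2, y.2 * x.1 + x.2 * star y.1)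

/-- Octonion conjugation. -/
def oconj (x : Oct) : Oct := (star x.1, -x.2)

/-- The unit octonion. -/
def oone : Oct := (1, 0)

/-- Real part of an octonion: the unique scalar with `x + oconj x = (2 * oRe x) • oone`. -/
def oRe (x : Oct) : ℂ := x.1.re

/-- Squared norm of an octonion: the unique scalar with `omul x (oconj x) = onormSq x • oone`. -/
def onormSq (x : Oct) : ℂ := Quaternion.normSq x.1 + Quaternion.normSq x.2

theorem omul_add (z x y : Oct) : omul z (x + y) = omul z x + omul z y := by
  simp only [omul, Prod.fst_add, Prod.snd_add, star_add (R := Hq), mul_add, add_mul, Prod.mk_add_mk,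
    Prod.mk.injEq]
  constructor <;> abel

theorem add_omul (x y z : Oct) : omul (x + y) z = omul x z + omul y z := by
  simp only [omul, Prod.fst_add, Prod.snd_add, star_add, mul_add, add_mul, Prod.mk_add_mk,
    Prod.mk.injEq]
  constructor <;> abel

theorem omul_smul (t : ℂ) (z x : Oct) : omul z (t • x) = t • omul z x := by
  simp only [omul, Prod.smul_fst, Prod.smul_snd, Quaternion.star_smul, q_smul_mul,
    q_mul_smul, Prod.smul_mk, smul_sub, smul_add]

theorem smul_omul (t : ℂ) (x z : Oct) : omul (t • x) z = t • omul x z := by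
  simp only [omul, Prod.smul_fst, Prod.smul_snd, Quaternion.star_smul, q_smul_mul,
    q_mul_smul, Prod.smul_mk, smul_sub, smul_add]

/-- Left multiplication `L_z` as a `ℂ`-linear endomorphism of the octonions. -/
def Lmul (z : Oct) : Oct →ₗ[ℂ] Oct where
  toFun x := omul z x
  map_add' x y := omul_add z x y
  map_smul' t x := omul_smul t z x

/-- Right multiplication `R_z` as a `ℂ`-linear endomorphism of the octonions. -/
def Rmul (z : Oct) : Oct →ₗ[ℂ] Oct where
  toFun x := omul x z
  map_add' x y := add_omul x y z
  map_smul' t x := smul_omul t x z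

end Oct

namespace Oct

/-- The octonionic determinant of the hermitian matrix
`[[λ₁, c, b̄], [c̄, λ₂, a], [b, ā, λ₃]]`. -/
def detO (l1 l2 l3 : ℂ) (a b c : Oct) : ℂ :=
  l1 * l2 * l3 + 2 * oRe (omul c (omul a b)) - l1 * onormSq a - l2 * onormSq b - l3 * onormSq c

/-- The associator `[c,b,a] = (c·b)·a − c·(b·a)`. -/
def assoc (c b a : Oct) : Oct := omul (omul c b) a - omul c (omul b a)

/-- `φ(c,b,a) = (1/2)·Re((c·b̄ − b̄·c)·a)`. -/
def phi (c b a : Oct) : ℂ := (1 / 2) * oRe (omul (omul c (oconj b) - omul (oconj b) c) a)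

/-- The Ogievetskiî–Dray–Manogue sextic. -/
def SODM (l1 l2 l3 : ℂ) (a b c : Oct) : ℂ :=
  detO l1 l2 l3 a b c ^ 2 - 4 * phi c b a * detO l1 l2 l3 a b c - onormSq (assoc c b a)

/-- The Cartan cubic `C'` of the hermitian matrix `[[λ₁, c̄, ā], [c, λ₂, b], [a, b̄, λ₃]]`. -/
def cartan' (l1 l2 l3 : ℂ) (a b c : Oct) : ℂ :=
  detO l1 l2 l3 a b c - 2 * oRe (omul c (omul a b)) + 2 * oRe (omul (oconj c) (omul b a))

/-- The sextic `𝔖`. -/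
def frakS (l1 l2 l3 : ℂ) (a b c : Oct) : ℂ :=
  (l1 * onormSq a + l2 * onormSq b + l3 * onormSq c - l1 * l2 * l3) ^ 2
    - 4 * (l1 * onormSq a + l2 * onormSq b + l3 * onormSq c - l1 * l2 * l3)
        * oRe c * oRe (omul a b)
    + 4 * (onormSq b * onormSq a * oRe c ^ 2 + onormSq c * oRe (omul a b) ^ 2
        - onormSq a * onormSq b * onormSq c)

/-- The endomorphism `M_A` of `𝕆³` attached to
`A = [[λ₁, c, b̄], [c̄, λ₂, a], [b, ā, λ₃]] ∈ J₃(𝕆)`. -/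
def MA (l1 l2 l3 : ℂ) (a b c : Oct) : Oct × Oct × Oct →ₗ[ℂ] Oct × Oct × Oct where
  toFun p := (l1 • p.1 + omul c p.2.1 + omul (oconj b) p.2.2,
              omul (oconj c) p.1 + l2 • p.2.1 + omul a p.2.2,
              omul b p.1 + omul (oconj a) p.2.1 + l3 • p.2.2)
  map_add' p q := by
    simp only [Prod.fst_add, Prod.snd_add, omul_add, smul_add, Prod.mk_add_mk, Prod.mk.injEq]
    refine ⟨?_, ?_, ?_⟩ <;> abel
  map_smul' t p := by
    simp only [Prod.smul_fst, Prod.smul_snd, omul_smul, smul_comm t, Prod.smul_mk, smul_add,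
      RingHom.id_apply]

/-- The endomorphism `N_A` of `𝕆³` of the twisted octonionic eigenvalue problem. -/
def NA (l1 l2 l3 : ℂ) (a b c : Oct) : Oct × Oct × Oct →ₗ[ℂ] Oct × Oct × Oct where
  toFun p := (l1 • p.1 + omul p.2.1 c + omul (oconj b) p.2.2,
              omul p.1 (oconj c) + l2 • p.2.1 + omul a p.2.2,
              omul b p.1 + omul (oconj a) p.2.1 + l3 • p.2.2)
  map_add' p q := by
    simp only [Prod.fst_add, Prod.snd_add, omul_add, add_omul, smul_add, Prod.mk_add_mk,
      Prod.mk.injEq]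
    refine ⟨?_, ?_, ?_⟩ <;> abel
  map_smul' t p := by
    simp only [Prod.smul_fst, Prod.smul_snd, omul_smul, smul_omul, smul_comm t, Prod.smul_mk,
      smul_add, RingHom.id_apply]

/-- The exceptional Jordan algebra `J₃(𝕆)`, as the 27-dimensional space of tuples
`(λ₁, λ₂, λ₃, a, b, c)`. -/
abbrev J3 : Type := ℂ × ℂ × ℂ × Oct × Oct × Oct

def MAj (A : J3) : Oct × Oct × Oct →ₗ[ℂ] Oct × Oct × Oct :=
  MA A.1 A.2.1 A.2.2.1 A.2.2.2.1 A.2.2.2.2.1 A.2.2.2.2.2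

def NAj (A : J3) : Oct × Oct × Oct →ₗ[ℂ] Oct × Oct × Oct :=
  NA A.1 A.2.1 A.2.2.1 A.2.2.2.1 A.2.2.2.2.1 A.2.2.2.2.2

def SODMj (A : J3) : ℂ := SODM A.1 A.2.1 A.2.2.1 A.2.2.2.1 A.2.2.2.2.1 A.2.2.2.2.2

def cartan'j (A : J3) : ℂ := cartan' A.1 A.2.1 A.2.2.1 A.2.2.2.1 A.2.2.2.2.1 A.2.2.2.2.2

def frakSj (A : J3) : ℂ := frakS A.1 A.2.1 A.2.2.1 A.2.2.2.1 A.2.2.2.2.1 A.2.2.2.2.2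

/-- A twisted triality pair: a pair of `ℂ`-linear norm-preserving bijections of `𝕆` with
`T₁(x)·T₂(y) = T₁(x·y)` for all `x, y`. -/
def TwistedPair (T1 T2 : Oct →ₗ[ℂ] Oct) : Prop :=
  Function.Bijective T1 ∧ Function.Bijective T2 ∧
    (∀ x, onormSq (T1 x) = onormSq x) ∧ (∀ x, onormSq (T2 x) = onormSq x) ∧
    ∀ x y, omul (T1 x) (T2 y) = T1 (omul x y)

/-- `K(x) = conj (T₁ x̄)`. -/
def Kmap (T1 : Oct →ₗ[ℂ] Oct) (x : Oct) : Oct := oconj (T1 (oconj x))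

/-- The twisted `Spin₇`-action on `J₃(𝕆)`:
`(T₁,T₂)·(λ₁, λ₂, λ₃, a, b, c) = (λ₁, λ₂, λ₃, T₁(a), K(b), T₂(c))`. -/
def spinAct (T1 T2 : Oct →ₗ[ℂ] Oct) (A : J3) : J3 :=
  (A.1, A.2.1, A.2.2.1, T1 A.2.2.2.1, Kmap T1 A.2.2.2.2.1, T2 A.2.2.2.2.2)

/-- The hermitian matrix `[[λ₁, c, b̄], [c̄, λ₂, a], [b, ā, λ₃]]` attached to `A ∈ J₃(𝕆)`,
with complex scalars embedded as multiples of the unit octonion. -/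
def toMat (A : J3) : Matrix (Fin 3) (Fin 3) Oct :=
  !![A.1 • oone, A.2.2.2.2.2, oconj A.2.2.2.2.1;
     oconj A.2.2.2.2.2, A.2.1 • oone, A.2.2.2.1;
     A.2.2.2.2.1, oconj A.2.2.2.1, A.2.2.1 • oone]

/-- The action of a (special linear) complex `3×3` matrix `C` on `J₃(𝕆)`, sending the hermitian
matrix `M` of `A` to `Cᵀ · M · C` (the entries of `C` being central scalars). -/
def slAct (C : Matrix (Fin 3) (Fin 3) ℂ) (A : J3) : J3 :=
  let M : Matrix (Fin 3) (Fin 3) Oct :=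
    Matrix.of fun i j => ∑ k, ∑ l, (C k i * C l j) • toMat A k l
  (oRe (M 0 0), oRe (M 1 1), oRe (M 2 2), M 1 2, M 2 0, M 0 1)

/-- The coordinates of `A ∈ J₃(𝕆)` in the fixed standard `ℂ`-basis of `ℂ³ × 𝕆³`. -/
def coords (A : J3) : Fin 27 → ℂ :=
  ![A.1, A.2.1, A.2.2.1,
    A.2.2.2.1.1.re, A.2.2.2.1.1.imI, A.2.2.2.1.1.imJ, A.2.2.2.1.1.imK,
    A.2.2.2.1.2.re, A.2.2.2.1.2.imI, A.2.2.2.1.2.imJ, A.2.2.2.1.2.imK,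
    A.2.2.2.2.1.1.re, A.2.2.2.2.1.1.imI, A.2.2.2.2.1.1.imJ, A.2.2.2.2.1.1.imK,
    A.2.2.2.2.1.2.re, A.2.2.2.2.1.2.imI, A.2.2.2.2.1.2.imJ, A.2.2.2.2.1.2.imK,
    A.2.2.2.2.2.1.re, A.2.2.2.2.2.1.imI, A.2.2.2.2.2.1.imJ, A.2.2.2.2.2.1.imK,
    A.2.2.2.2.2.2.re, A.2.2.2.2.2.2.imI, A.2.2.2.2.2.2.imJ, A.2.2.2.2.2.2.imK]

end Oct


namespace OctAux

open Polynomial Module LinearMap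

theorem matrix_charpoly_add_smul_one {n : ℕ} (A : Matrix (Fin n) (Fin n) ℂ) (μ : ℂ) :
    (A + μ • (1 : Matrix (Fin n) (Fin n) ℂ)).charpoly
      = A.charpoly.comp (X - C μ) := by
  have hcomp : A.charpoly.comp (X - C μ) = eval₂RingHom C (X - C μ) A.charpoly := rfl
  rw [hcomp, Matrix.charpoly, Matrix.charpoly, RingHom.map_det]
  congr 1
  ext i j
  by_cases h : i = j
  · subst h
    simp [Matrix.charmatrix_apply, Matrix.one_apply, Matrix.add_apply, map_add, map_sub, mul_comm]
    ring
  · simp [Matrix.charmatrix_apply_ne _ _ _ h, Matrix.one_apply_ne h, Matrix.add_apply]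

theorem charpoly_eq_pow_of_isNilpotent_sub {V : Type*} [AddCommGroup V] [Module ℂ V]
    [FiniteDimensional ℂ V] (F : Module.End ℂ V) (μ : ℂ)
    (h : IsNilpotent (F - μ • (1 : Module.End ℂ V))) :
    F.charpoly = (X - C μ) ^ (Module.finrank ℂ V) := by
  let b := Module.finBasis ℂ V
  have hMat : LinearMap.toMatrix b b F
      = LinearMap.toMatrix b b (F - μ • (1 : Module.End ℂ V)) + μ • 1 := by
    rw [map_sub, map_smul]
    rw [LinearMap.toMatrix_one, sub_add_cancel]
  rw [← LinearMap.charpoly_toMatrix F b, hMat, matrix_charpoly_add_smul_one,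
    LinearMap.charpoly_toMatrix, h.charpoly_eq_X_pow_finrank, X_pow_comp]

open Module.Free in
theorem pow_finrank_maxGenEigenspace_dvd_charpoly {M : Type*} [AddCommGroup M] [Module ℂ M]
    [FiniteDimensional ℂ M] (f : Module.End ℂ M) (μ : ℂ) :
    (X - C μ) ^ (finrank ℂ (f.maxGenEigenspace μ)) ∣ f.charpoly := by
  set ψ := f - μ • (1 : Module.End ℂ M) with hψdef
  set V := f.maxGenEigenspace μ with hVdef
  have hV : V = ⨆ (n : ℕ), LinearMap.ker (ψ ^ n) := by
    rw [hVdef, ← Module.End.iSup_genEigenspace_eq]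
    simp_rw [Module.End.genEigenspace_nat]
    rfl
  let W : Submodule ℂ M := ⨅ (n : ℕ), LinearMap.range (ψ ^ n)
  have hVW : IsCompl V W := by
    rw [hV]
    exact LinearMap.isCompl_iSup_ker_pow_iInf_range_pow ψ
  have hfV : ∀ x ∈ V, f x ∈ V := fun x hx =>
    Module.End.mapsTo_maxGenEigenspace_of_comm (Commute.refl f) μ hx
  have hψW : ∀ x ∈ W, ψ x ∈ W := by
    simp only [W, Submodule.mem_iInf, LinearMap.mem_range]
    intro x H n
    obtain ⟨y, rfl⟩ := H n
    exact ⟨ψ y, by rw [← Module.End.mul_apply, ← pow_succ, pow_succ', Module.End.mul_apply]⟩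
  have hfW : ∀ x ∈ W, f x ∈ W := by
    intro x hx
    have hfx : f x = ψ x + μ • x := by simp [hψdef]
    rw [hfx]
    exact W.add_mem (hψW x hx) (W.smul_mem μ hx)
  let F := f.restrict hfV
  let G := f.restrict hfW
  let φ := F.prodMap G
  let e := Submodule.prodEquivOfIsCompl V W hVW
  let bV := chooseBasis ℂ V
  let bW := chooseBasis ℂ W
  let b := bV.prod bW
  have hφ : φ = e.symm.conj f := by
    apply b.ext
    simp only [Basis.prod_apply, coe_inl, coe_inr, prodMap_apply, LinearEquiv.conj_apply,
      LinearEquiv.symm_symm, Submodule.coe_prodEquivOfIsCompl, coe_comp, LinearEquiv.coe_coe,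
      Function.comp_apply, coprod_apply, Submodule.coe_subtype, map_add, Sum.forall, Sum.elim_inl,
      map_zero, ZeroMemClass.coe_zero, add_zero, LinearEquiv.eq_symm_apply, and_self,
      Submodule.coe_prodEquivOfIsCompl', restrict_coe_apply, implies_true, Sum.elim_inr, zero_add,
      e, V, W, φ, F, G, b]
  have hsplit : f.charpoly = F.charpoly * G.charpoly := by
    rw [← e.symm.charpoly_conj f, ← hφ]
    exact charpoly_prodMap F G
  have hnil : IsNilpotent (F - μ • (1 : Module.End ℂ V)) := by
    have hres := Module.End.isNilpotent_restrict_maxGenEigenspace_sub_algebraMap f μ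
    have : F - μ • (1 : Module.End ℂ V)
        = (f - algebraMap ℂ (Module.End ℂ M) μ).restrict
          (Module.End.mapsTo_maxGenEigenspace_of_comm
            (Algebra.mul_sub_algebraMap_commutes f μ) μ) := by
      ext x
      simp [F, LinearMap.restrict_apply, LinearMap.restrict_coe_apply, Module.algebraMap_end_apply]
      rfl
    rwa [this]
  have hF : F.charpoly = (X - C μ) ^ (finrank ℂ V) :=
    charpoly_eq_pow_of_isNilpotent_sub F μ hnil
  rw [hsplit, hF]
  exact Dvd.intro _ rfl

end OctAux

namespace Oct

open Polynomial Module LinearMap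

/-- The symmetric bilinear pairing `⟨u, x⟩ = Re(ū·x)`. -/
def ip (u x : Oct) : ℂ := oRe (omul (oconj u) x)

theorem oRe_add (x y : Oct) : oRe (x + y) = oRe x + oRe y := rfl

theorem oRe_smul (t : ℂ) (x : Oct) : oRe (t • x) = t * oRe x := rfl

/-- `⟨u, ·⟩` as a linear functional. -/
def ipL (u : Oct) : Oct →ₗ[ℂ] ℂ where
  toFun x := ip u x
  map_add' x y := by
    show oRe (omul (oconj u) (x + y)) = oRe (omul (oconj u) x) + oRe (omul (oconj u) y)
    rw [omul_add, oRe_add]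
  map_smul' t x := by
    show oRe (omul (oconj u) (t • x)) = t * oRe (omul (oconj u) x)
    rw [omul_smul, oRe_smul]

set_option maxHeartbeats 2000000 in
/-- The fundamental identity: `a·(b·(x·c)) + (b̄·(ā·x))·c̄` equals `2Re(c̄·(b·a))·x` plus a
correction belonging to a fixed 4-dimensional subspace. -/
theorem key_identity (a b c x : Oct) :
    omul a (omul b (omul x c)) + omul (omul (oconj b) (omul (oconj a) x)) (oconj c)
      = (2 * oRe (omul (oconj c) (omul b a))) • x
        + ((2 * ip (omul a c) x) • oconj b + (2 * ip (oconj b) x) • omul a c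
        - (2 * ip (omul (oconj b) c) x) • a - (2 * ip a x) • omul (oconj b) c) := by
  obtain ⟨a1, a2⟩ := a; obtain ⟨b1, b2⟩ := b; obtain ⟨c1, c2⟩ := c; obtain ⟨x1, x2⟩ := x
  simp only [ip, omul, oconj, oRe, Prod.mk_add_mk, Prod.mk_sub_mk, Prod.smul_mk, Prod.mk.injEq]
  constructor <;>
  · ext <;>
      simp only [Quaternion.re_mul, Quaternion.imI_mul, Quaternion.imJ_mul, Quaternion.imK_mul,
        Quaternion.re_add, Quaternion.imI_add, Quaternion.imJ_add, Quaternion.imK_add,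
        Quaternion.re_sub, Quaternion.imI_sub, Quaternion.imJ_sub, Quaternion.imK_sub,
        Quaternion.re_neg, Quaternion.imI_neg, Quaternion.imJ_neg, Quaternion.imK_neg,
        Quaternion.re_star, Quaternion.imI_star, Quaternion.imJ_star, Quaternion.imK_star,
        Quaternion.re_smul, Quaternion.imI_smul, Quaternion.imJ_smul, Quaternion.imK_smul,
        smul_eq_mul] <;>
      ring

theorem finrank_oct : finrank ℂ Oct = 8 := by
  rw [Module.finrank_prod, Quaternion.finrank_eq_four]

theorem finrank_ker_ipL (u : Oct) : 7 ≤ finrank ℂ (LinearMap.ker (ipL u)) := by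
  have h1 : finrank ℂ (LinearMap.range (ipL u)) ≤ 1 := by
    simpa using Submodule.finrank_le (LinearMap.range (ipL u))
  have h2 := LinearMap.finrank_range_add_finrank_ker (ipL u)
  rw [finrank_oct] at h2
  omega

theorem finrank_inf_ge (p q : Submodule ℂ Oct) :
    finrank ℂ p + finrank ℂ q - 8 ≤ finrank ℂ ↥(p ⊓ q) := by
  have h1 := Submodule.finrank_sup_add_finrank_inf_eq p q
  have h2 : finrank ℂ ↥(p ⊔ q) ≤ 8 := by
    have := Submodule.finrank_le (p ⊔ q)
    rwa [finrank_oct] at this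
  omega

end Oct

namespace Oct

/-- For all `a, b, c ∈ 𝕆`, the characteristic polynomial of `L_a∘L_b∘R_c + R_c̄∘L_b̄∘L_ā`
is divisible by `(X − 2·Re(c̄·(b·a)))⁴`: the scalar `2·Re(c̄·(b·a))` is an eigenvalue of
`x ↦ a·(b·(x·c)) + (b̄·(ā·x))·c̄` of algebraic multiplicity at least `4`. -/
theorem charpoly_divisibility (a b c : Oct) :
    (Polynomial.X - Polynomial.C (2 * oRe (omul (oconj c) (omul b a)))) ^ 4 ∣
      LinearMap.charpoly
        (Lmul a ∘ₗ Lmul b ∘ₗ Rmul c + Rmul (oconj c) ∘ₗ Lmul (oconj b) ∘ₗ Lmul (oconj a)) := by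
  classical
  set μ := 2 * oRe (omul (oconj c) (omul b a)) with hμ
  set f : Module.End ℂ Oct :=
    Lmul a ∘ₗ Lmul b ∘ₗ Rmul c + Rmul (oconj c) ∘ₗ Lmul (oconj b) ∘ₗ Lmul (oconj a) with hf
  have happ : ∀ x : Oct, f x
      = omul a (omul b (omul x c)) + omul (omul (oconj b) (omul (oconj a) x)) (oconj c) := by
    intro x
    simp [hf, Lmul, Rmul, LinearMap.add_apply, LinearMap.comp_apply]
  -- the 4-codimensional subspace on which `f` acts as `μ`
  set U : Submodule ℂ Oct :=
    ((LinearMap.ker (ipL (omul a c)) ⊓ LinearMap.ker (ipL (oconj b)))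
      ⊓ LinearMap.ker (ipL (omul (oconj b) c))) ⊓ LinearMap.ker (ipL a) with hU
  have hU4 : 4 ≤ Module.finrank ℂ U := by
    have k1 := finrank_ker_ipL (omul a c)
    have k2 := finrank_ker_ipL (oconj b)
    have k3 := finrank_ker_ipL (omul (oconj b) c)
    have k4 := finrank_ker_ipL a
    have i1 := finrank_inf_ge (LinearMap.ker (ipL (omul a c))) (LinearMap.ker (ipL (oconj b)))
    have i2 := finrank_inf_ge (LinearMap.ker (ipL (omul a c)) ⊓ LinearMap.ker (ipL (oconj b)))
      (LinearMap.ker (ipL (omul (oconj b) c)))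
    have i3 := finrank_inf_ge ((LinearMap.ker (ipL (omul a c)) ⊓ LinearMap.ker (ipL (oconj b)))
      ⊓ LinearMap.ker (ipL (omul (oconj b) c))) (LinearMap.ker (ipL a))
    rw [hU]
    omega
  have hUeig : U ≤ f.maxGenEigenspace μ := by
    intro x hx
    rw [hU] at hx
    obtain ⟨⟨⟨h1, h2⟩, h3⟩, h4⟩ := hx
    have h1' : ip (omul a c) x = 0 := h1
    have h2' : ip (oconj b) x = 0 := h2
    have h3' : ip (omul (oconj b) c) x = 0 := h3
    have h4' : ip a x = 0 := h4
    have hfx : f x = μ • x := by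
      rw [happ, key_identity a b c x, h1', h2', h3', h4']
      rw [← hμ]
      module
    rw [Module.End.mem_maxGenEigenspace]
    refine ⟨1, ?_⟩
    simp [pow_one, LinearMap.sub_apply, hfx]
  have hmono : 4 ≤ Module.finrank ℂ (f.maxGenEigenspace μ) :=
    le_trans hU4 (Submodule.finrank_mono hUeig)
  have hdvd := OctAux.pow_finrank_maxGenEigenspace_dvd_charpoly f μ
  exact dvd_trans (pow_dvd_pow _ hmono) hdvd


end Oct
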